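/- For the quasi-conformal coframe, the two-indexed B-object ⁽¹⁾B_{ab} = B_{abm}{}^m is given explicitly by: ⁽¹⁾B₀₀ = −e^{−2f}Δ̃φ; ⁽¹⁾B_{ii} = −e^{−2f}(Δ̃φ − φ_{ii}) for each spatial i (i.e. ⁽¹⁾B₁₁ = −e^{−2f}(φ₂₂+φ₃₃), etc.); ⁽¹⁾B_{ij} = e^{−2f}φ_{ij} for spatial i ≠ j; and ⁽¹⁾B_{0i} = ⁽¹⁾B_{i0} = 0. -/

import Mathlib

open scoped BigOperators

noncomputable section

/-- Partial derivative along coordinate `i` on `ℝ³`. -/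
def pd (i : Fin 3) (f : (Fin 3 → ℝ) → ℝ) : (Fin 3 → ℝ) → ℝ :=
  fun x => fderiv ℝ f x (Pi.single i 1)

/-- Partial derivative indexed by a 4-index: zero for the time index `0`. -/
def pd4 (f : (Fin 3 → ℝ) → ℝ) (p : Fin 4) : (Fin 3 → ℝ) → ℝ :=
  if h : p = 0 then 0 else pd (p.pred h) f

/-- Signs of the Minkowski metric `η = diag(1,−1,−1,−1)`. -/
def epsM (a : Fin 4) : ℝ := if a = 0 then 1 else -1

/-- The Minkowski metric `η = diag(1,−1,−1,−1)`. -/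
def etaM (a b : Fin 4) : ℝ := if a = b then epsM a else 0

/-- Anholonomity objects `C^a_{mn}` of the quasi-conformal coframe
`ϑ⁰ = e^{−f}dt`, `ϑⁱ = e^{f}dxⁱ`:  `C⁰_{0i} = e^{−f}fᵢ`, `C^i_{ij} = −e^{−f}fⱼ`
(spatial `i ≠ j`), antisymmetric in the lower pair, all other components zero. -/
def Cob (f : (Fin 3 → ℝ) → ℝ) (a m n : Fin 4) : (Fin 3 → ℝ) → ℝ := fun x =>
  if a = 0 then
    Real.exp (-f x) * ((if m = 0 then pd4 f n x else 0) - (if n = 0 then pd4 f m x else 0))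
  else
    Real.exp (-f x) * ((if n = a then pd4 f m x else 0) - (if m = a then pd4 f n x else 0))

/-- The contraction `C_a := C^m_{am}`. -/
def Cone (f : (Fin 3 → ℝ) → ℝ) (a : Fin 4) : (Fin 3 → ℝ) → ℝ :=
  fun x => ∑ m : Fin 4, Cob f m a m x

/-- The B-objects `B^a_{mn0} := 0`, `B^a_{mnp} := e^{−f} ∂_p C^a_{mn}` for `p = 1,2,3`. -/
def Bob (f : (Fin 3 → ℝ) → ℝ) (a m n p : Fin 4) : (Fin 3 → ℝ) → ℝ :=
  fun x => Real.exp (-f x) * pd4 (Cob f a m n) p x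

/-- `⁽¹⁾B_{ab} := B_{abm}{}^m` (indices moved with `η`). -/
def B1 (f : (Fin 3 → ℝ) → ℝ) (a b : Fin 4) : (Fin 3 → ℝ) → ℝ :=
  fun x => epsM a * ∑ m : Fin 4, epsM m * Bob f a b m m x

/-- `⁽²⁾B_{ab} := B^m{}_{mab}`. -/
def B2 (f : (Fin 3 → ℝ) → ℝ) (a b : Fin 4) : (Fin 3 → ℝ) → ℝ :=
  fun x => ∑ m : Fin 4, Bob f m m a b x

/-- `⁽³⁾B_{ab} := B^m{}_{abm}`. -/
def B3 (f : (Fin 3 → ℝ) → ℝ) (a b : Fin 4) : (Fin 3 → ℝ) → ℝ :=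
  fun x => ∑ m : Fin 4, Bob f m a b m x

/-- The scalar B-object `B := η^{ab}⁽¹⁾B_{ab}`. -/
def Bscalar (f : (Fin 3 → ℝ) → ℝ) : (Fin 3 → ℝ) → ℝ :=
  fun x => ∑ a : Fin 4, epsM a * B1 f a a x

/-- `⁽¹⁾A_{ab} := C_{abm}C^m`. -/
def A1 (f : (Fin 3 → ℝ) → ℝ) (a b : Fin 4) : (Fin 3 → ℝ) → ℝ :=
  fun x => epsM a * ∑ m : Fin 4, epsM m * Cob f a b m x * Cone f m x

/-- `⁽²⁾A_{ab} := C_{mab}C^m`. -/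
def A2 (f : (Fin 3 → ℝ) → ℝ) (a b : Fin 4) : (Fin 3 → ℝ) → ℝ :=
  fun x => ∑ m : Fin 4, Cob f m a b x * Cone f m x

/-- `⁽³⁾A_{ab} := C_{amn}C_b{}^{mn}`. -/
def A3 (f : (Fin 3 → ℝ) → ℝ) (a b : Fin 4) : (Fin 3 → ℝ) → ℝ :=
  fun x => epsM a * epsM b *
    ∑ m : Fin 4, ∑ n : Fin 4, epsM m * epsM n * Cob f a m n x * Cob f b m n x

/-- `⁽⁴⁾A_{ab} := C_{amn}C^m{}_b{}^n`. -/
def A4 (f : (Fin 3 → ℝ) → ℝ) (a b : Fin 4) : (Fin 3 → ℝ) → ℝ :=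
  fun x => epsM a * ∑ m : Fin 4, ∑ n : Fin 4, epsM n * Cob f a m n x * Cob f m b n x

/-- `⁽⁵⁾A_{ab} := C_{man}C^n{}_b{}^m`. -/
def A5 (f : (Fin 3 → ℝ) → ℝ) (a b : Fin 4) : (Fin 3 → ℝ) → ℝ :=
  fun x => ∑ m : Fin 4, ∑ n : Fin 4, Cob f m a n x * Cob f n b m x

/-- `⁽⁶⁾A_{ab} := C_{man}C^m{}_b{}^n`. -/
def A6 (f : (Fin 3 → ℝ) → ℝ) (a b : Fin 4) : (Fin 3 → ℝ) → ℝ :=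
  fun x => ∑ m : Fin 4, ∑ n : Fin 4, epsM m * epsM n * Cob f m a n x * Cob f m b n x

/-- `⁽⁷⁾A_{ab} := C_a C_b`. -/
def A7 (f : (Fin 3 → ℝ) → ℝ) (a b : Fin 4) : (Fin 3 → ℝ) → ℝ :=
  fun x => Cone f a x * Cone f b x

/-- `⁽¹⁾A := η^{ab}⁽¹⁾A_{ab}`. -/
def A1s (f : (Fin 3 → ℝ) → ℝ) : (Fin 3 → ℝ) → ℝ :=
  fun x => ∑ a : Fin 4, epsM a * A1 f a a x

/-- `⁽²⁾A := η^{ab}⁽³⁾A_{ab}`. -/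
def A2s (f : (Fin 3 → ℝ) → ℝ) : (Fin 3 → ℝ) → ℝ :=
  fun x => ∑ a : Fin 4, epsM a * A3 f a a x

/-- `⁽³⁾A := η^{ab}⁽⁴⁾A_{ab}`. -/
def A3s (f : (Fin 3 → ℝ) → ℝ) : (Fin 3 → ℝ) → ℝ :=
  fun x => ∑ a : Fin 4, epsM a * A4 f a a x

/-- `φ_{ij} := f_{ij} − fᵢfⱼ`. -/
def phiM (f : (Fin 3 → ℝ) → ℝ) (i j : Fin 3) : (Fin 3 → ℝ) → ℝ :=
  fun x => pd i (pd j f) x - pd i f x * pd j f x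

/-- `Δ̃φ := φ₁₁ + φ₂₂ + φ₃₃`. -/
def tphi (f : (Fin 3 → ℝ) → ℝ) : (Fin 3 → ℝ) → ℝ :=
  fun x => ∑ i : Fin 3, phiM f i i x

/-- The Laplacian `Δf := f₁₁ + f₂₂ + f₃₃`. -/
def lap (f : (Fin 3 → ℝ) → ℝ) : (Fin 3 → ℝ) → ℝ :=
  fun x => ∑ i : Fin 3, pd i (pd i f) x

/-- `∇²f := f₁² + f₂² + f₃²`. -/
def grad2 (f : (Fin 3 → ℝ) → ℝ) : (Fin 3 → ℝ) → ℝ :=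
  fun x => ∑ i : Fin 3, pd i f x ^ 2

/-- The leading (second order) part
`L_{ab} = β₁⁽¹⁾B_{(ab)} + β₂⁽²⁾B_{(ab)} + β₃⁽³⁾B_{ab} + β₄η_{ab}B + β₅⁽¹⁾B_{[ab]} + β₆⁽²⁾B_{[ab]}`. -/
def Lmat (β₁ β₂ β₃ β₄ β₅ β₆ : ℝ) (f : (Fin 3 → ℝ) → ℝ) (a b : Fin 4) :
    (Fin 3 → ℝ) → ℝ := fun x =>
  β₁ * ((B1 f a b x + B1 f b a x) / 2) + β₂ * ((B2 f a b x + B2 f b a x) / 2) +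
  β₃ * B3 f a b x + β₄ * etaM a b * Bscalar f x +
  β₅ * ((B1 f a b x - B1 f b a x) / 2) + β₆ * ((B2 f a b x - B2 f b a x) / 2)

/-- The quadratic part `Q_{ab}`. -/
def Qmat (α₁ α₂ α₃ α₄ α₅ α₆ α₇ α₈ α₉ α₁₀ α₁₁ α₁₂ : ℝ) (f : (Fin 3 → ℝ) → ℝ)
    (a b : Fin 4) : (Fin 3 → ℝ) → ℝ := fun x =>
  α₁ * ((A1 f a b x + A1 f b a x) / 2) + α₂ * A2 f a b x + α₃ * A3 f a b x +
  α₄ * ((A4 f a b x + A4 f b a x) / 2) + α₅ * A5 f a b x + α₆ * A6 f a b x +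
  α₇ * A7 f a b x + α₈ * ((A1 f a b x - A1 f b a x) / 2) +
  α₉ * ((A4 f a b x - A4 f b a x) / 2) +
  etaM a b * (α₁₀ * A1s f x + α₁₁ * A2s f x + α₁₂ * A3s f x)

/-- `diag(β₁−β₄, β₁+β₄, β₁+β₄, β₁+β₄)`. -/
def diagM (β₁ β₄ : ℝ) (a b : Fin 4) : ℝ :=
  if a = b then (if a = 0 then β₁ - β₄ else β₁ + β₄) else 0

section Helpers
variable (f : (Fin 3 → ℝ) → ℝ)

lemma contDiff_pd (hf : ContDiff ℝ (⊤ : ℕ∞) f) (j : Fin 3) :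
    ContDiff ℝ (⊤ : ℕ∞) (pd j f) :=
  (hf.fderiv_right (by exact_mod_cast le_top)).clm_apply contDiff_const

lemma pdE (hf : ContDiff ℝ (⊤ : ℕ∞) f) (i j : Fin 3) (x : Fin 3 → ℝ) :
    pd i (fun x => Real.exp (-f x) * pd j f x) x = Real.exp (-f x) * phiM f i j x := by
  have hfd : DifferentiableAt ℝ f x := (hf.differentiable (by simp)) x
  have hg : DifferentiableAt ℝ (fun x => Real.exp (-f x)) x := hfd.neg.exp
  have hh : DifferentiableAt ℝ (pd j f) x :=
    ((contDiff_pd f hf j).differentiable (by simp)) x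
  show fderiv ℝ _ x _ = _
  rw [fderiv_fun_mul hg hh, fderiv_exp (f := fun y => -f y) hfd.neg, fderiv_fun_neg]
  simp [phiM, pd]
  ring

lemma pd_neg (g : (Fin 3 → ℝ) → ℝ) (i : Fin 3) (x : Fin 3 → ℝ) :
    pd i (fun x => -(g x)) x = -(pd i g x) := by
  simp [pd, fderiv_neg]

lemma pdnegE (hf : ContDiff ℝ (⊤ : ℕ∞) f) (i j : Fin 3) (x : Fin 3 → ℝ) :
    pd i (fun x => -(Real.exp (-f x) * pd j f x)) x = -(Real.exp (-f x) * phiM f i j x) := by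
  rw [pd_neg, pdE f hf]

lemma pd_zero' (i : Fin 3) (x : Fin 3 → ℝ) : pd i (fun _ => (0:ℝ)) x = 0 := by
  simp [pd]

lemma pd4_zero (g : (Fin 3 → ℝ) → ℝ) (x : Fin 3 → ℝ) : pd4 g 0 x = 0 := rfl
lemma pd4_one (g : (Fin 3 → ℝ) → ℝ) : pd4 g 1 = pd 0 g := rfl
lemma pd4_two (g : (Fin 3 → ℝ) → ℝ) : pd4 g 2 = pd 1 g := rfl
lemma pd4_three (g : (Fin 3 → ℝ) → ℝ) : pd4 g 3 = pd 2 g := rfl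

lemma cob00 (n : Fin 4) : Cob f 0 0 n = fun x => Real.exp (-f x) * pd4 f n x := by
  funext x; by_cases h : n = 0 <;> simp [Cob, pd4, h]

lemma cob0 {b n : Fin 4} (hb : b ≠ 0) (hn : n ≠ 0) : Cob f 0 b n = fun _ => 0 := by
  funext x; simp [Cob, hb, hn]

lemma cobA_eq {a b : Fin 4} (ha : a ≠ 0) (hb : b ≠ a) :
    Cob f a b a = fun x => Real.exp (-f x) * pd4 f b x := by
  funext x; simp [Cob, ha, hb]

lemma cobAA' {a n : Fin 4} (ha : a ≠ 0) (hn : n ≠ a) :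
    Cob f a a n = fun x => -(Real.exp (-f x) * pd4 f n x) := by
  funext x; simp [Cob, ha, hn]

lemma cobAA {a : Fin 4} (ha : a ≠ 0) : Cob f a a a = fun _ => 0 := by
  funext x; simp [Cob, ha]

lemma cobAgen {a b n : Fin 4} (ha : a ≠ 0) (hb : b ≠ a) (hn : n ≠ a) :
    Cob f a b n = fun _ => 0 := by
  funext x; simp [Cob, ha, hb, hn]
end Helpers

lemma succ0 : (0 : Fin 3).succ = 1 := rfl
lemma succ1 : (1 : Fin 3).succ = 2 := rfl
lemma succ2 : (2 : Fin 3).succ = 3 := rfl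

/-- for the quasi-conformal coframe, the two-indexed B-object
`⁽¹⁾B_{ab} = B_{abm}{}^m` is given by `⁽¹⁾B₀₀ = −e^{−2f}Δ̃φ`,
`⁽¹⁾B_{ii} = −e^{−2f}(Δ̃φ − φ_{ii})`, `⁽¹⁾B_{ij} = e^{−2f}φ_{ij}` for spatial `i ≠ j`,
and `⁽¹⁾B_{0i} = ⁽¹⁾B_{i0} = 0`. -/
theorem B1_explicit (f : (Fin 3 → ℝ) → ℝ) (hf : ContDiff ℝ (⊤ : ℕ∞) f)
    (x : Fin 3 → ℝ) :
    B1 f 0 0 x = -Real.exp (-2 * f x) * tphi f x ∧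
    (∀ i : Fin 3, B1 f i.succ i.succ x =
      -Real.exp (-2 * f x) * (tphi f x - phiM f i i x)) ∧
    (∀ i j : Fin 3, i ≠ j →
      B1 f i.succ j.succ x = Real.exp (-2 * f x) * phiM f i j x) ∧
    (∀ i : Fin 3, B1 f 0 i.succ x = 0 ∧ B1 f i.succ 0 x = 0) := by
  have hE : Real.exp (-(2 * f x)) = Real.exp (-f x) * Real.exp (-f x) := by
    rw [← Real.exp_add]; ring_nf
  refine ⟨?_, ?_, ?_, ?_⟩
  · simp [B1, Bob, Fin.sum_univ_four, epsM, pd4_zero, pd4_one, pd4_two, pd4_three,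
      cob00, pdE f hf, tphi, Fin.sum_univ_three, hE]
    ring
  · intro i; fin_cases i <;>
    · simp [B1, Bob, Fin.sum_univ_four, epsM, pd4_zero, pd4_one, pd4_two, pd4_three,
        succ0, succ1, succ2, cobAA, cobAA', cobA_eq, cobAgen, cob00, cob0,
        pdE f hf, pdnegE f hf, pd_zero', tphi, Fin.sum_univ_three, hE]
      ring
  · intro i j hij; fin_cases i <;> fin_cases j <;> first
      | exact absurd rfl hij
      | (simp [B1, Bob, Fin.sum_univ_four, epsM, pd4_zero, pd4_one, pd4_two, pd4_three,
          succ0, succ1, succ2, cobAA, cobAA', cobA_eq, cobAgen, cob00, cob0,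
          pdE f hf, pdnegE f hf, pd_zero', hE]
         ring)
  · intro i
    fin_cases i <;> refine ⟨?_, ?_⟩ <;>
      simp [B1, Bob, Fin.sum_univ_four, epsM, pd4_zero, pd4_one, pd4_two, pd4_three,
        succ0, succ1, succ2, cobAA, cobAA', cobA_eq, cobAgen, cob00, cob0,
        pdE f hf, pdnegE f hf, pd_zero', hE]
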